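/- arXiv:2104.13886 — 7 statements merged into one kernel-verified Lean document; each statement's English description precedes it below -/
import Mathlib

section
/- Let M and N be symmetric positive semidefinite n×n real matrices with M positive definite, and let μ, τ, λ > 0 be real parameters. Define S̃ = (1/λ) M + M (τ M + 2μ N)⁻¹ N. Then S̃ is invertible and S̃⁻¹ = (2μλ/(2μ+λ)) M⁻¹ + τ (λ/(2μ+λ))² (τ/(2μ+λ) M + N)⁻¹. -/
open Matrix

lemma posDef_smul_aux {n : Type*} [Fintype n] {M : Matrix n n ℝ} (hM : M.PosDef)
    {c : ℝ} (hc : 0 < c) : (c • M).PosDef := by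
  refine ⟨?_, fun x hx => ?_⟩
  · unfold Matrix.IsHermitian
    rw [conjTranspose_smul, hM.1.eq]
    simp
  · exact (hM.smul hc).2 hx

lemma posSemidef_smul_aux {n : Type*} [Fintype n] {M : Matrix n n ℝ} (hM : M.PosSemidef)
    {c : ℝ} (hc : 0 ≤ c) : (c • M).PosSemidef := by
  refine ⟨?_, fun x => ?_⟩
  · unfold Matrix.IsHermitian
    rw [conjTranspose_smul, hM.1.eq]
    simp
  · exact (hM.smul hc).2 x

/-- Exact inverse of the Schur complement preconditioner `S̃` (Theorem 3.10):
for `M` SPD, `N` symmetric PSD and `μ, τ, λ > 0`,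
`S̃ = (1/λ) M + M (τ M + 2μ N)⁻¹ N` is invertible with
`S̃⁻¹ = (2μλ/(2μ+λ)) M⁻¹ + τ (λ/(2μ+λ))² ((τ/(2μ+λ)) M + N)⁻¹`. -/
theorem schur_preconditioner_exact_inverse {n : Type*} [Fintype n] [DecidableEq n]
    (M N : Matrix n n ℝ) (hM : M.PosDef) (hN : N.PosSemidef)
    (μ τ lam : ℝ) (hμ : 0 < μ) (hτ : 0 < τ) (hlam : 0 < lam) :
    IsUnit ((1 / lam) • M + M * (τ • M + (2 * μ) • N)⁻¹ * N).det ∧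
      ((1 / lam) • M + M * (τ • M + (2 * μ) • N)⁻¹ * N)⁻¹ =
        (2 * μ * lam / (2 * μ + lam)) • M⁻¹ +
          (τ * (lam / (2 * μ + lam)) ^ 2) • ((τ / (2 * μ + lam)) • M + N)⁻¹ := by
  have hs : 0 < 2 * μ + lam := by linarith
  set A := τ • M + (2 * μ) • N with hA
  set B := (τ / (2 * μ + lam)) • M + N with hB
  have hApd : A.PosDef :=
    (posDef_smul_aux hM hτ).add_posSemidef (posSemidef_smul_aux hN (by positivity))
  have hBpd : B.PosDef :=
    (posDef_smul_aux hM (by positivity)).add_posSemidef hN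
  have hAdet : IsUnit A.det := hApd.det_pos.ne'.isUnit
  have hBdet : IsUnit B.det := hBpd.det_pos.ne'.isUnit
  have hMdet : IsUnit M.det := hM.det_pos.ne'.isUnit
  have hc : ((2 * μ + lam) / lam) ≠ 0 := by positivity
  -- the key factorization
  have hcomb : (1 / lam) • A + N = ((2 * μ + lam) / lam) • B := by
    rw [hA, hB]
    match_scalars <;> (field_simp; try ring)
  have key : (1 / lam) • M + M * A⁻¹ * N = ((2 * μ + lam) / lam) • (M * A⁻¹ * B) := by
    have h1 : M * A⁻¹ * ((1 / lam) • A + N) = (1 / lam) • M + M * A⁻¹ * N := by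
      rw [Matrix.mul_add, Matrix.mul_smul, Matrix.mul_assoc, nonsing_inv_mul A hAdet, mul_one]
    rw [← h1, hcomb, Matrix.mul_smul]
  have hdet3 : IsUnit (M * A⁻¹ * B).det := by
    rw [det_mul, det_mul, det_nonsing_inv]
    exact (hMdet.mul (isUnit_ringInverse.mpr hAdet)).mul hBdet
  refine ⟨?_, ?_⟩
  · rw [key, det_smul]
    exact (hc.isUnit.pow _).mul hdet3
  · have hA2 : A = (2 * μ) • B + (τ * lam / (2 * μ + lam)) • M := by
      rw [hA, hB]
      match_scalars <;> field_simp <;> ring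
    have hinv3 : (M * A⁻¹ * B)⁻¹ = B⁻¹ * (A * M⁻¹) := by
      rw [Matrix.mul_inv_rev, Matrix.mul_inv_rev, nonsing_inv_nonsing_inv A hAdet]
    have hBAM : B⁻¹ * (A * M⁻¹) =
        (2 * μ) • M⁻¹ + (τ * lam / (2 * μ + lam)) • B⁻¹ := by
      rw [hA2, Matrix.add_mul, Matrix.smul_mul, Matrix.smul_mul, Matrix.mul_add,
        Matrix.mul_smul, Matrix.mul_smul, mul_nonsing_inv M hMdet, ← Matrix.mul_assoc,
        nonsing_inv_mul B hBdet, Matrix.one_mul, Matrix.mul_one]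
    rw [key]
    haveI : Invertible ((2 * μ + lam) / lam) := invertibleOfNonzero hc
    rw [Matrix.inv_smul (M * A⁻¹ * B) ((2 * μ + lam) / lam) hdet3, hinv3, hBAM, invOf_eq_inv]
    match_scalars <;> field_simp <;> ring
end

section
/- Let A be a symmetric positive definite n×n real matrix and B an n×m real matrix. Then for every vector P ∈ ℝᵐ, ⟨Bᵀ A⁻¹ B P, P⟩ = sup over nonzero V ∈ ℝⁿ of ⟨B P, V⟩² / ⟨A V, V⟩. -/
open Matrix

/-- Variational characterization of the quadratic form of `Bᵀ A⁻¹ B` (Lemma 3.6):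
`⟨Bᵀ A⁻¹ B P, P⟩ = sup_{V ≠ 0} ⟨B P, V⟩² / ⟨A V, V⟩`. -/
theorem schur_quadratic_form_sup {n m : Type*} [Fintype n] [Fintype m]
    [DecidableEq n] [Nonempty n]
    (A : Matrix n n ℝ) (hA : A.PosDef) (B : Matrix n m ℝ) (P : m → ℝ) :
    (Bᵀ * A⁻¹ * B).mulVec P ⬝ᵥ P =
      sSup {r : ℝ | ∃ V : n → ℝ, V ≠ 0 ∧
        r = (B.mulVec P ⬝ᵥ V) ^ 2 / (A.mulVec V ⬝ᵥ V)} := by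
  classical
  set Q : n → ℝ := B *ᵥ P with hQdef
  set x : n → ℝ := A⁻¹ *ᵥ Q with hxdef
  have hAt : Aᵀ = A := hA.isHermitian
  have hAinv : A * A⁻¹ = 1 := Matrix.mul_nonsing_inv A hA.det_pos.ne'.isUnit
  have hx : A *ᵥ x = Q := by
    rw [hxdef, mulVec_mulVec, hAinv, one_mulVec]
  set L : ℝ := x ⬝ᵥ Q with hLdef
  set S : Set ℝ := {r : ℝ | ∃ V : n → ℝ, V ≠ 0 ∧
      r = (Q ⬝ᵥ V) ^ 2 / (A *ᵥ V ⬝ᵥ V)} with hSdef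
  -- the LHS equals L
  have hLHS : (Bᵀ * A⁻¹ * B) *ᵥ P ⬝ᵥ P = L := by
    rw [← Matrix.mulVec_mulVec, ← Matrix.mulVec_mulVec]
    rw [mulVec_transpose, ← Matrix.dotProduct_mulVec]
  -- symmetry fact
  have hsym : ∀ V : n → ℝ, (A *ᵥ V) ⬝ᵥ x = Q ⬝ᵥ V := by
    intro V
    rw [dotProduct_comm, Matrix.dotProduct_mulVec, ← mulVec_transpose, hAt, hx,
      dotProduct_comm]
  -- Cauchy–Schwarz bound
  have hbound : ∀ r ∈ S, r ≤ L := by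
    rintro r ⟨V, hV, rfl⟩
    have ha : 0 < A *ᵥ V ⬝ᵥ V := by
      rw [dotProduct_comm]; simpa using hA.dotProduct_mulVec_pos hV
    set a : ℝ := A *ᵥ V ⬝ᵥ V with hadef
    set c : ℝ := Q ⬝ᵥ V with hcdef
    have h0 : 0 ≤ (a • x - c • V) ⬝ᵥ A *ᵥ (a • x - c • V) := by
      simpa using hA.posSemidef.dotProduct_mulVec_nonneg (a • x - c • V)
    have hexp : (a • x - c • V) ⬝ᵥ A *ᵥ (a • x - c • V) = a * (a * L - c ^ 2) := by
      have h1 : x ⬝ᵥ A *ᵥ x = L := by rw [hx]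
      have h2 : x ⬝ᵥ A *ᵥ V = c := by rw [dotProduct_comm, hsym]
      have h3 : V ⬝ᵥ A *ᵥ x = c := by rw [hx, dotProduct_comm]
      have h4 : V ⬝ᵥ A *ᵥ V = a := by rw [hadef, dotProduct_comm]
      simp only [Matrix.mulVec_sub, Matrix.mulVec_smul, dotProduct_sub, sub_dotProduct,
        smul_dotProduct, dotProduct_smul, smul_eq_mul, h1, h2, h3, h4]
      ring
    rw [hexp] at h0
    have : c ^ 2 ≤ a * L := by nlinarith
    rw [div_le_iff₀ ha]
    linarith [this]
  -- L is attained (or is 0, attained)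
  have hmem : L ∈ S := by
    by_cases hQ0 : Q = 0
    · have hL0 : L = 0 := by simp [hLdef, hQ0]
      refine ⟨fun _ => 1, ?_, ?_⟩
      · intro h
        have := congrFun h (Classical.arbitrary n)
        simpa using this
      · simp [hQ0, hL0]
    · have hxne : x ≠ 0 := by
        intro h
        apply hQ0
        rw [← hx, h, mulVec_zero]
      have hLpos : 0 < L := by
        rw [hLdef, dotProduct_comm]
        simpa using hA.inv.dotProduct_mulVec_pos hQ0
      refine ⟨x, hxne, ?_⟩
      have hQx : Q ⬝ᵥ x = L := by rw [hLdef, dotProduct_comm]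
      rw [hx, hQx, sq, mul_div_assoc, div_self hLpos.ne', mul_one]
  rw [hLHS]
  exact le_antisymm (le_csSup ⟨L, hbound⟩ hmem) (csSup_le ⟨L, hmem⟩ hbound)
end

section
/- Let X₁, X₂ and Y₁, Y₂ be pairs of compatible normed vector spaces and let T be a linear map bounded both as a map X₁ → Y₁ with norm M₁ and as a map X₂ → Y₂ with norm M₂. Then T maps X₁ + X₂ into Y₁ + Y₂ and its operator norm with respect to the sum norms ‖z‖²_{X+Y} = inf_{z=x+y}(‖x‖² + ‖y‖²) satisfies ‖T‖_{X₁+X₂ → Y₁+Y₂} ≤ (M₁² + M₂²)^{1/2}. -/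
/-- Lemma 2.2 (boundedness on sum spaces): if the linear map `T` (defined on the
ambient space) restricts to a bounded map `X₁ → Y₁` with constant `M₁` and to a
bounded map `X₂ → Y₂` with constant `M₂`, then `T` maps `X₁ + X₂` into `Y₁ + Y₂`
and `‖T z‖_{Y₁+Y₂} ≤ √(M₁² + M₂²) ‖z‖_{X₁+X₂}` in the sum norms
`‖z‖² = inf_{z = x + y} (‖x‖² + ‖y‖²)`. -/
theorem map_bounded_on_sum_space
    {X₁ X₂ Y₁ Y₂ Z W : Type*}
    [NormedAddCommGroup X₁] [NormedSpace ℝ X₁]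
    [NormedAddCommGroup X₂] [NormedSpace ℝ X₂]
    [NormedAddCommGroup Y₁] [NormedSpace ℝ Y₁]
    [NormedAddCommGroup Y₂] [NormedSpace ℝ Y₂]
    [AddCommGroup Z] [Module ℝ Z] [AddCommGroup W] [Module ℝ W]
    (i₁ : X₁ →ₗ[ℝ] Z) (i₂ : X₂ →ₗ[ℝ] Z) (j₁ : Y₁ →ₗ[ℝ] W) (j₂ : Y₂ →ₗ[ℝ] W)
    (T : Z →ₗ[ℝ] W) (M₁ M₂ : ℝ) (hM₁ : 0 ≤ M₁) (hM₂ : 0 ≤ M₂)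
    (h₁ : ∀ x : X₁, ∃ y : Y₁, T (i₁ x) = j₁ y ∧ ‖y‖ ≤ M₁ * ‖x‖)
    (h₂ : ∀ x : X₂, ∃ y : Y₂, T (i₂ x) = j₂ y ∧ ‖y‖ ≤ M₂ * ‖x‖) :
    let fX : Z → ℝ := fun z =>
      Real.sqrt (sInf {r : ℝ | ∃ x : X₁, ∃ y : X₂, z = i₁ x + i₂ y ∧ r = ‖x‖ ^ 2 + ‖y‖ ^ 2})
    let fY : W → ℝ := fun w =>
      Real.sqrt (sInf {r : ℝ | ∃ x : Y₁, ∃ y : Y₂, w = j₁ x + j₂ y ∧ r = ‖x‖ ^ 2 + ‖y‖ ^ 2})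
    ∀ z ∈ LinearMap.range i₁ ⊔ LinearMap.range i₂,
      T z ∈ LinearMap.range j₁ ⊔ LinearMap.range j₂ ∧
        fY (T z) ≤ Real.sqrt (M₁ ^ 2 + M₂ ^ 2) * fX z := by
  intro fX fY z hz
  -- get a decomposition of z
  rw [Submodule.mem_sup] at hz
  obtain ⟨_, ⟨x₀, rfl⟩, _, ⟨y₀, rfl⟩, hz⟩ := hz
  obtain ⟨u₀, hu₀, _⟩ := h₁ x₀
  obtain ⟨v₀, hv₀, _⟩ := h₂ y₀
  have hmem : T z ∈ LinearMap.range j₁ ⊔ LinearMap.range j₂ := by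
    rw [Submodule.mem_sup]
    exact ⟨j₁ u₀, ⟨u₀, rfl⟩, j₂ v₀, ⟨v₀, rfl⟩, by rw [← hz, map_add, hu₀, hv₀]⟩
  refine ⟨hmem, ?_⟩
  set SX := {r : ℝ | ∃ x : X₁, ∃ y : X₂, z = i₁ x + i₂ y ∧ r = ‖x‖ ^ 2 + ‖y‖ ^ 2}
  set SY := {r : ℝ |
    ∃ x : Y₁, ∃ y : Y₂, T z = j₁ x + j₂ y ∧ r = ‖x‖ ^ 2 + ‖y‖ ^ 2}
  have hSXne : SX.Nonempty := ⟨‖x₀‖ ^ 2 + ‖y₀‖ ^ 2, x₀, y₀, hz.symm, rfl⟩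
  have hSYbdd : BddBelow SY := by
    refine ⟨0, fun r hr => ?_⟩
    obtain ⟨x, y, _, rfl⟩ := hr
    positivity
  have hSXbdd : BddBelow SX := by
    refine ⟨0, fun r hr => ?_⟩
    obtain ⟨x, y, _, rfl⟩ := hr
    positivity
  set c := Real.sqrt (M₁ ^ 2 + M₂ ^ 2) with hc
  have hc0 : 0 ≤ c := Real.sqrt_nonneg _
  -- key estimate: for every r ∈ SX, fY (T z) ≤ c * sqrt r
  have key : ∀ r ∈ SX, fY (T z) ≤ c * Real.sqrt r := by
    rintro r ⟨x, y, hxy, rfl⟩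
    obtain ⟨u, hu, hun⟩ := h₁ x
    obtain ⟨v, hv, hvn⟩ := h₂ y
    have hmemY : ‖u‖ ^ 2 + ‖v‖ ^ 2 ∈ SY :=
      ⟨u, v, by rw [hxy, map_add, hu, hv], rfl⟩
    have h1 : sInf SY ≤ ‖u‖ ^ 2 + ‖v‖ ^ 2 := csInf_le hSYbdd hmemY
    have h2 : ‖u‖ ^ 2 + ‖v‖ ^ 2 ≤ (M₁ ^ 2 + M₂ ^ 2) * (‖x‖ ^ 2 + ‖y‖ ^ 2) := by
      have e1 : ‖u‖ ^ 2 ≤ (M₁ * ‖x‖) ^ 2 := by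
        apply pow_le_pow_left₀ (norm_nonneg _) hun
      have e2 : ‖v‖ ^ 2 ≤ (M₂ * ‖y‖) ^ 2 := by
        apply pow_le_pow_left₀ (norm_nonneg _) hvn
      nlinarith [norm_nonneg x, norm_nonneg y, sq_nonneg M₁, sq_nonneg M₂]
    calc fY (T z) = Real.sqrt (sInf SY) := rfl
      _ ≤ Real.sqrt ((M₁ ^ 2 + M₂ ^ 2) * (‖x‖ ^ 2 + ‖y‖ ^ 2)) :=
        Real.sqrt_le_sqrt (h1.trans h2)
      _ = c * Real.sqrt (‖x‖ ^ 2 + ‖y‖ ^ 2) := Real.sqrt_mul (by positivity) _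
  have hfY0 : 0 ≤ fY (T z) := Real.sqrt_nonneg _
  rcases eq_or_lt_of_le hc0 with hc0' | hcpos
  · obtain ⟨r, hr⟩ := hSXne
    have := key r hr
    rw [← hc0'] at this
    simp only [zero_mul] at this
    have : fY (T z) = 0 := le_antisymm this hfY0
    rw [this, ← hc0', zero_mul]
  · -- c > 0 case
    have hdiv : (fY (T z) / c) ^ 2 ≤ sInf SX := by
      apply le_csInf hSXne
      intro r hr
      have hrle : fY (T z) / c ≤ Real.sqrt r := by
        rw [div_le_iff₀ hcpos, mul_comm]
        exact key r hr
      have : (fY (T z) / c) ^ 2 ≤ Real.sqrt r ^ 2 :=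
        pow_le_pow_left₀ (by positivity) hrle 2
      calc (fY (T z) / c) ^ 2 ≤ Real.sqrt r ^ 2 := this
        _ = r := Real.sq_sqrt (by
            obtain ⟨x, y, _, rfl⟩ := hr; positivity)
    have : fY (T z) / c ≤ Real.sqrt (sInf SX) := by
      have := Real.sqrt_le_sqrt hdiv
      rwa [Real.sqrt_sq (by positivity)] at this
    calc fY (T z) = c * (fY (T z) / c) := by field_simp
      _ ≤ c * Real.sqrt (sInf SX) := by
          exact mul_le_mul_of_nonneg_left this hc0
      _ = c * fX z := rfl
end

section
/- Let X and Y be Hilbert spaces compatibly embedded in a common Hilbert space, with X ∩ Y dense in both X and Y. Then for every bounded linear functional g on X ∩ Y (equipped with norm ‖z‖² = ‖z‖²_X + ‖z‖²_Y), the dual norm satisfies ‖g‖_{(X∩Y)'} = ‖g‖_{X' + Y'}, where X' + Y' carries the sum norm ‖g‖² = inf_{g = g₁ + g₂}(‖g₁‖²_{X'} + ‖g₂‖²_{Y'}). -/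
lemma cs_aux (a b c d : ℝ) :
    a * b + c * d ≤ Real.sqrt (a ^ 2 + c ^ 2) * Real.sqrt (b ^ 2 + d ^ 2) := by
  rw [← Real.sqrt_mul (by positivity)]
  rcases le_or_gt (a * b + c * d) 0 with h | h
  · exact h.trans (Real.sqrt_nonneg _)
  · rw [show a * b + c * d = Real.sqrt ((a*b+c*d)^2) by rw [Real.sqrt_sq h.le]]
    apply Real.sqrt_le_sqrt
    nlinarith [sq_nonneg (a*d - c*b)]


/-- Lemma 2.2, duality relation `(X ∩ Y)' = X' + Y'` for compatible Hilbert spaces: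
with `X`, `Y` Hilbert spaces continuously embedded into a common Hilbert space `H`
and `X ∩ Y` (realized as the compatible pairs `{(x, y) : iX x = iY y}` with the
norm `‖z‖² = ‖z‖²_X + ‖z‖²_Y`) dense in both `X` and `Y`, every bounded linear
functional `g` on `X ∩ Y` satisfies `‖g‖_{(X∩Y)'} = ‖g‖_{X'+Y'}`, where the sum of
the dual norms is `inf_{g = g₁ + g₂} √(‖g₁‖²_{X'} + ‖g₂‖²_{Y'})`. -/
theorem dual_norm_intersection_eq_sum_dual
    {H X Y : Type*}
    [NormedAddCommGroup H] [InnerProductSpace ℝ H] [CompleteSpace H]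
    [NormedAddCommGroup X] [InnerProductSpace ℝ X] [CompleteSpace X]
    [NormedAddCommGroup Y] [InnerProductSpace ℝ Y] [CompleteSpace Y]
    (iX : X →L[ℝ] H) (iY : Y →L[ℝ] H)
    (hiX : Function.Injective iX) (hiY : Function.Injective iY)
    (E : Submodule ℝ (WithLp 2 (X × Y)))
    (hE : E = LinearMap.ker
      ((iX.toLinearMap.comp (LinearMap.fst ℝ X Y) -
          iY.toLinearMap.comp (LinearMap.snd ℝ X Y)).comp
        (WithLp.linearEquiv 2 ℝ (X × Y)).toLinearMap))
    (hdenseX : DenseRange (fun p : E => (WithLp.equiv 2 (X × Y) p.val).1))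
    (hdenseY : DenseRange (fun p : E => (WithLp.equiv 2 (X × Y) p.val).2))
    (g : E →L[ℝ] ℝ) :
    ‖g‖ = sInf {r : ℝ | ∃ (g₁ : X →L[ℝ] ℝ) (g₂ : Y →L[ℝ] ℝ),
      (∀ p : E, g p = g₁ ((WithLp.equiv 2 (X × Y) p.val).1) +
        g₂ ((WithLp.equiv 2 (X × Y) p.val).2)) ∧
      r = Real.sqrt (‖g₁‖ ^ 2 + ‖g₂‖ ^ 2)} := by
  -- Hahn-Banach extension
  obtain ⟨G, hGe, hGn⟩ := exists_extension_norm_eq E g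
  set v : WithLp 2 (X × Y) := (InnerProductSpace.toDual ℝ (WithLp 2 (X × Y))).symm G with hv
  have hGapp : ∀ w : WithLp 2 (X × Y), G w = inner ℝ v w := by
    intro w
    rw [← InnerProductSpace.toDual_symm_apply]
  have hvn : ‖v‖ = ‖g‖ := by
    rw [hv, LinearIsometryEquiv.norm_map, hGn]
  set g₁ : X →L[ℝ] ℝ := innerSL ℝ v.fst with hg₁
  set g₂ : Y →L[ℝ] ℝ := innerSL ℝ v.snd with hg₂
  have hng₁ : ‖g₁‖ = ‖v.fst‖ := innerSL_apply_norm _ _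
  have hng₂ : ‖g₂‖ = ‖v.snd‖ := innerSL_apply_norm _ _
  have hmem : ‖g‖ ∈ {r : ℝ | ∃ (g₁ : X →L[ℝ] ℝ) (g₂ : Y →L[ℝ] ℝ),
      (∀ p : E, g p = g₁ ((WithLp.equiv 2 (X × Y) p.val).1) +
        g₂ ((WithLp.equiv 2 (X × Y) p.val).2)) ∧
      r = Real.sqrt (‖g₁‖ ^ 2 + ‖g₂‖ ^ 2)} := by
    refine ⟨g₁, g₂, fun p => ?_, ?_⟩
    · rw [← hGe p, hGapp p.val, WithLp.prod_inner_apply]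
      rfl
    · rw [hng₁, hng₂, ← WithLp.prod_norm_sq_eq_of_L2, Real.sqrt_sq (norm_nonneg _), hvn]
  refine le_antisymm (le_csInf ⟨_, hmem⟩ ?_) (csInf_le ⟨0, ?_⟩ hmem)
  · rintro r ⟨f₁, f₂, hrep, rfl⟩
    apply g.opNorm_le_bound (Real.sqrt_nonneg _)
    intro p
    rw [hrep p]
    calc |f₁ ((WithLp.equiv 2 (X × Y) p.val).1) + f₂ ((WithLp.equiv 2 (X × Y) p.val).2)|
        ≤ ‖f₁‖ * ‖(WithLp.equiv 2 (X × Y) p.val).1‖ + ‖f₂‖ * ‖(WithLp.equiv 2 (X × Y) p.val).2‖ := by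
          refine (abs_add_le _ _).trans (add_le_add (f₁.le_opNorm _) (f₂.le_opNorm _))
      _ ≤ Real.sqrt (‖f₁‖ ^ 2 + ‖f₂‖ ^ 2) * Real.sqrt (‖(WithLp.equiv 2 (X × Y) p.val).1‖ ^ 2 + ‖(WithLp.equiv 2 (X × Y) p.val).2‖ ^ 2) := cs_aux _ _ _ _
      _ = Real.sqrt (‖f₁‖ ^ 2 + ‖f₂‖ ^ 2) * ‖p‖ := by
          congr 1
          rw [show (‖p‖ : ℝ) = ‖p.val‖ from rfl, WithLp.prod_norm_eq_of_L2]
          rfl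
  · rintro r ⟨f₁, f₂, hrep, rfl⟩
    exact Real.sqrt_nonneg _
end

section
/- Let M, N be symmetric positive semidefinite m×m real matrices with M positive definite, and let μ, τ > 0. For P ∈ ℝᵐ, the infimum over all decompositions P = P₁ + P₂ of (1/(2μ))⟨M P₁, P₁⟩ + (1/τ)⟨N P₂, P₂⟩ is attained at P₁ = ((τ/(2μ)) M + N)⁻¹ N P, and the infimum value equals (1/(2μ)) ⟨M ((τ/(2μ)) M + N)⁻¹ N P, P⟩. -/
open Matrix

lemma symm_dot {m : Type*} [Fintype m] {S : Matrix m m ℝ} (hS : Sᵀ = S) (x y : m → ℝ) :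
    S.mulVec x ⬝ᵥ y = S.mulVec y ⬝ᵥ x := by
  rw [dotProduct_comm, dotProduct_mulVec, ← mulVec_transpose, hS, dotProduct_comm]

/-- The infimum over decompositions `P = P₁ + P₂` of
`(1/(2μ))⟨M P₁, P₁⟩ + (1/τ)⟨N P₂, P₂⟩` is attained at
`P₁ = ((τ/(2μ)) M + N)⁻¹ N P` with value `(1/(2μ)) ⟨M ((τ/(2μ)) M + N)⁻¹ N P, P⟩`. -/
theorem quadratic_splitting_infimum {m : Type*} [Fintype m] [DecidableEq m]
    (M N : Matrix m m ℝ) (hM : M.PosDef) (hN : N.PosSemidef)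
    (μ τ : ℝ) (hμ : 0 < μ) (hτ : 0 < τ) (P : m → ℝ) :
    let P₁ : m → ℝ := (((τ / (2 * μ)) • M + N)⁻¹ * N).mulVec P
    let v : ℝ := (1 / (2 * μ)) * ((M * ((τ / (2 * μ)) • M + N)⁻¹ * N).mulVec P ⬝ᵥ P)
    IsLeast {r : ℝ | ∃ Q₁ Q₂ : m → ℝ, P = Q₁ + Q₂ ∧
        r = (1 / (2 * μ)) * (M.mulVec Q₁ ⬝ᵥ Q₁) + (1 / τ) * (N.mulVec Q₂ ⬝ᵥ Q₂)} v ∧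
      (1 / (2 * μ)) * (M.mulVec P₁ ⬝ᵥ P₁) +
        (1 / τ) * (N.mulVec (P - P₁) ⬝ᵥ (P - P₁)) = v := by
  intro P₁ v
  have hc : (0:ℝ) < τ / (2 * μ) := by positivity
  have hμ' : (2:ℝ) * μ ≠ 0 := by positivity
  have hτ' : τ ≠ 0 := hτ.ne'
  set A : Matrix m m ℝ := (τ / (2 * μ)) • M + N with hAdef
  have hMsmul : ((τ / (2 * μ)) • M).PosDef := by
    refine ⟨?_, fun x hx => ?_⟩
    · show _ᴴ = _
      rw [conjTranspose_smul, hM.1.eq]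
      simp
    · convert smul_pos hc (hM.2 hx) using 1
      simp only [smul_eq_mul, Finsupp.mul_sum, Matrix.smul_apply, star_trivial]
      exact Finsupp.sum_congr fun i _ => Finsupp.sum_congr fun j _ => by ring
  have hApd : A.PosDef := hMsmul.add_posSemidef hN
  have hinv : A * A⁻¹ = 1 := A.mul_nonsing_inv hApd.det_pos.ne'.isUnit
  have hMt : Mᵀ = M := hM.1
  have hNt : Nᵀ = N := hN.1
  have hE : A.mulVec P₁ = N.mulVec P := by
    show A.mulVec ((A⁻¹ * N).mulVec P) = _
    rw [mulVec_mulVec, ← Matrix.mul_assoc, hinv, Matrix.one_mul]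
  have hEw : ∀ w : m → ℝ, τ * (M.mulVec P₁ ⬝ᵥ w) + (2 * μ) * (N.mulVec P₁ ⬝ᵥ w)
      = (2 * μ) * (N.mulVec P ⬝ᵥ w) := by
    intro w
    have h := congrArg (fun u => (2 * μ) * (u ⬝ᵥ w)) hE
    simp only [hAdef, add_mulVec, smul_mulVec, add_dotProduct, smul_dotProduct,
      smul_eq_mul] at h
    field_simp at h
    linarith [h]
  have hv : v = (1 / (2 * μ)) * (M.mulVec P₁ ⬝ᵥ P) := by
    show (1 / (2 * μ)) * ((M * A⁻¹ * N).mulVec P ⬝ᵥ P) = _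
    rw [Matrix.mul_assoc, ← mulVec_mulVec]
  have hval : (1 / (2 * μ)) * (M.mulVec P₁ ⬝ᵥ P₁) +
      (1 / τ) * (N.mulVec (P - P₁) ⬝ᵥ (P - P₁)) = v := by
    have e1 := hEw P
    have e2 := hEw P₁
    rw [hv]
    simp only [mulVec_sub, sub_dotProduct, dotProduct_sub]
    field_simp
    linear_combination e2 - e1
  refine ⟨⟨⟨P₁, P - P₁, by abel, hval.symm⟩, ?_⟩, hval⟩
  rintro r ⟨Q₁, Q₂, hPQ, rfl⟩
  have hQ2 : Q₂ = P - Q₁ := by rw [hPQ]; abel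
  subst hQ2
  set d : m → ℝ := Q₁ - P₁ with hd
  have hQ1 : Q₁ = P₁ + d := by simp [hd]
  have hPQ1 : P - Q₁ = (P - P₁) - d := by rw [hQ1]; abel
  rw [hPQ1, hQ1]
  have hMd : 0 ≤ M.mulVec d ⬝ᵥ d := by
    rw [dotProduct_comm]; simpa using hM.posSemidef.dotProduct_mulVec_nonneg d
  have hNd : 0 ≤ N.mulVec d ⬝ᵥ d := by
    rw [dotProduct_comm]; simpa using hN.dotProduct_mulVec_nonneg d
  have e3 := hEw d
  have sM : M.mulVec P₁ ⬝ᵥ d = M.mulVec d ⬝ᵥ P₁ := symm_dot hMt P₁ d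
  have sN1 : N.mulVec P ⬝ᵥ d = N.mulVec d ⬝ᵥ P := symm_dot hNt P d
  have sN2 : N.mulVec P₁ ⬝ᵥ d = N.mulVec d ⬝ᵥ P₁ := symm_dot hNt P₁ d
  have expand : (1 / (2 * μ)) * (M.mulVec (P₁ + d) ⬝ᵥ (P₁ + d)) +
      (1 / τ) * (N.mulVec ((P - P₁) - d) ⬝ᵥ ((P - P₁) - d))
      = ((1 / (2 * μ)) * (M.mulVec P₁ ⬝ᵥ P₁) +
        (1 / τ) * (N.mulVec (P - P₁) ⬝ᵥ (P - P₁)))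
        + ((1 / (2 * μ)) * (M.mulVec d ⬝ᵥ d) + (1 / τ) * (N.mulVec d ⬝ᵥ d)) := by
    have key : (1 / τ) * (N.mulVec P ⬝ᵥ d) - (1 / τ) * (N.mulVec P₁ ⬝ᵥ d)
        = (1 / (2 * μ)) * (M.mulVec P₁ ⬝ᵥ d) := by
      field_simp
      linarith [e3]
    simp only [mulVec_add, mulVec_sub, add_dotProduct, sub_dotProduct,
      dotProduct_add, dotProduct_sub]
    linear_combination (-2 : ℝ) * key - (1 / (2 * μ)) * sM + (1 / τ) * sN1 - (1 / τ) * sN2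
  rw [expand, hval]
  have hnn : 0 ≤ (1 / (2 * μ)) * (M.mulVec d ⬝ᵥ d) + (1 / τ) * (N.mulVec d ⬝ᵥ d) := by
    positivity
  linarith
end

section
/- Let M, N be symmetric m×m real matrices with M positive definite and N positive semidefinite, and let λ, μ, τ > 0. Define the quadratic functional |P|²_* = (1/λ)⟨M P, P⟩ + inf_{P = P₁ + P₂} ( (1/(2μ))⟨M P₁, P₁⟩ + (1/τ)⟨N P₂, P₂⟩ ). Then |P|²_* = ⟨S̃ P, P⟩ for all P, where S̃ = (1/λ) M + M (τ M + 2μ N)⁻¹ N. -/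
open Matrix

/-- Theorem 3.9: the parameter-dependent norm
`|P|²_* = (1/λ)⟨M P, P⟩ + inf_{P = P₁+P₂} ((1/(2μ))⟨M P₁, P₁⟩ + (1/τ)⟨N P₂, P₂⟩)`
equals `⟨S̃ P, P⟩` with `S̃ = (1/λ) M + M (τ M + 2μ N)⁻¹ N`. -/
theorem star_norm_eq_schur_preconditioner {m : Type*} [Fintype m] [DecidableEq m]
    (M N : Matrix m m ℝ) (hM : M.PosDef) (hN : N.PosSemidef)
    (lam μ τ : ℝ) (hlam : 0 < lam) (hμ : 0 < μ) (hτ : 0 < τ) (P : m → ℝ) :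
    (1 / lam) * (M.mulVec P ⬝ᵥ P) +
        sInf {r : ℝ | ∃ P₁ P₂ : m → ℝ, P = P₁ + P₂ ∧
          r = (1 / (2 * μ)) * (M.mulVec P₁ ⬝ᵥ P₁) + (1 / τ) * (N.mulVec P₂ ⬝ᵥ P₂)} =
      ((1 / lam) • M + M * (τ • M + (2 * μ) • N)⁻¹ * N).mulVec P ⬝ᵥ P := by
  have hμ' : (2 * μ) ≠ 0 := by positivity
  have hτ' : τ ≠ 0 := hτ.ne'
  set a : ℝ := 1 / (2 * μ) with ha_def
  set b : ℝ := 1 / τ with hb_def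
  have ha : 0 < a := by positivity
  have hb : 0 < b := by positivity
  set A : Matrix m m ℝ := a • M + b • N with hA_def
  -- symmetry facts
  have hMt : Mᵀ = M := by
    rw [← conjTranspose_eq_transpose_of_trivial]; exact hM.1
  have hNt : Nᵀ = N := by
    rw [← conjTranspose_eq_transpose_of_trivial]; exact hN.1
  have hAt : Aᵀ = A := by
    simp [hA_def, transpose_add, transpose_smul, hMt, hNt]
  have hswap : ∀ (Q : Matrix m m ℝ), Qᵀ = Q → ∀ x y : m → ℝ,
      Q *ᵥ x ⬝ᵥ y = Q *ᵥ y ⬝ᵥ x := by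
    intro Q hQ x y
    rw [dotProduct_comm (Q *ᵥ x) y, dotProduct_mulVec, ← mulVec_transpose, hQ]
  -- A is positive definite
  have haM : (a • M).PosDef := by
    refine Matrix.PosDef.of_dotProduct_mulVec_pos ?_ (fun x hx => ?_)
    · show (a • M)ᴴ = a • M
      rw [conjTranspose_smul, star_trivial, hM.1.eq]
    · have := hM.dotProduct_mulVec_pos hx
      simp only [smul_mulVec, dotProduct_smul, smul_eq_mul]
      exact mul_pos ha this
  have hbN : (b • N).PosSemidef := by
    refine Matrix.PosSemidef.of_dotProduct_mulVec_nonneg ?_ (fun x => ?_)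
    · show (b • N)ᴴ = b • N
      rw [conjTranspose_smul, star_trivial, hN.1.eq]
    · have := hN.dotProduct_mulVec_nonneg x
      simp only [smul_mulVec, dotProduct_smul, smul_eq_mul]
      exact mul_nonneg hb.le this
  have hA : A.PosDef := haM.add_posSemidef hbN
  have hAdet : IsUnit A.det := (Matrix.isUnit_iff_isUnit_det A).mp hA.isUnit
  have hAinv : A * A⁻¹ = 1 := Matrix.mul_nonsing_inv A hAdet
  -- minimizer
  set w : m → ℝ := A⁻¹ *ᵥ (N *ᵥ P) with hw_def
  have hAw : A *ᵥ w = N *ᵥ P := by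
    rw [hw_def, mulVec_mulVec, hAinv, one_mulVec]
  set xs : m → ℝ := b • w with hxs_def
  have hAxs : A *ᵥ xs = b • (N *ᵥ P) := by
    rw [hxs_def, mulVec_smul, hAw]
  set v : ℝ := b * (N *ᵥ P ⬝ᵥ P) - A *ᵥ xs ⬝ᵥ xs with hv_def
  -- quadratic expansion
  have expand : ∀ x : m → ℝ,
      a * (M *ᵥ x ⬝ᵥ x) + b * (N *ᵥ (P - x) ⬝ᵥ (P - x)) =
        A *ᵥ (x - xs) ⬝ᵥ (x - xs) + v := by
    intro x
    have h1 : A *ᵥ (x - xs) ⬝ᵥ (x - xs)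
        = A *ᵥ x ⬝ᵥ x - A *ᵥ x ⬝ᵥ xs - A *ᵥ xs ⬝ᵥ x + A *ᵥ xs ⬝ᵥ xs := by
      rw [mulVec_sub, sub_dotProduct, dotProduct_sub, dotProduct_sub]
      ring
    have h2 : A *ᵥ x ⬝ᵥ xs = A *ᵥ xs ⬝ᵥ x := hswap A hAt x xs
    have h3 : A *ᵥ x ⬝ᵥ x = a * (M *ᵥ x ⬝ᵥ x) + b * (N *ᵥ x ⬝ᵥ x) := by
      rw [hA_def, add_mulVec, add_dotProduct, smul_mulVec, smul_mulVec,
        smul_dotProduct, smul_dotProduct, smul_eq_mul, smul_eq_mul]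
    have h4 : N *ᵥ (P - x) ⬝ᵥ (P - x)
        = N *ᵥ P ⬝ᵥ P - 2 * (N *ᵥ P ⬝ᵥ x) + N *ᵥ x ⬝ᵥ x := by
      rw [mulVec_sub, sub_dotProduct, dotProduct_sub, dotProduct_sub,
        hswap N hNt x P]
      ring
    have h5 : A *ᵥ xs ⬝ᵥ x = b * (N *ᵥ P ⬝ᵥ x) := by
      rw [hAxs, smul_dotProduct, smul_eq_mul]
    rw [h1, h2, h3, h4, h5, hv_def]
    ring
  -- the infimum equals v
  set S : Set ℝ := {r : ℝ | ∃ P₁ P₂ : m → ℝ, P = P₁ + P₂ ∧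
      r = (1 / (2 * μ)) * (M.mulVec P₁ ⬝ᵥ P₁) + (1 / τ) * (N.mulVec P₂ ⬝ᵥ P₂)} with hS_def
  have hmem : v ∈ S := by
    refine ⟨xs, P - xs, by abel, ?_⟩
    have h := expand xs
    rw [sub_self, mulVec_zero, zero_dotProduct, zero_add] at h
    exact h.symm
  have hlb : ∀ r ∈ S, v ≤ r := by
    rintro r ⟨P₁, P₂, hP, rfl⟩
    have hP₂ : P₂ = P - P₁ := by rw [hP]; abel
    rw [hP₂, ← ha_def, ← hb_def, expand P₁]
    have h0 : 0 ≤ A *ᵥ (P₁ - xs) ⬝ᵥ (P₁ - xs) := by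
      have := hA.posSemidef.dotProduct_mulVec_nonneg (P₁ - xs)
      rwa [star_trivial, dotProduct_comm] at this
    linarith
  have hsInf : sInf S = v :=
    le_antisymm (csInf_le ⟨v, fun r hr => hlb r hr⟩ hmem) (le_csInf ⟨v, hmem⟩ hlb)
  rw [hsInf]
  -- final matrix algebra
  set C : Matrix m m ℝ := τ • M + (2 * μ) • N with hC_def
  have hCA : C = (2 * μ * τ) • A := by
    rw [hC_def, hA_def, smul_add, smul_smul, smul_smul]
    congr 1
    · congr 1
      rw [ha_def]; field_simp
    · congr 1
      rw [hb_def]; field_simp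
  have hk : (2 * μ * τ) ≠ 0 := by positivity
  have hCinv : C⁻¹ = (2 * μ * τ)⁻¹ • A⁻¹ := by
    apply Matrix.inv_eq_right_inv
    rw [hCA, Matrix.smul_mul, Matrix.mul_smul, smul_smul, hAinv,
      mul_inv_cancel₀ hk, one_smul]
  have hgoal : (M * C⁻¹ * N) *ᵥ P ⬝ᵥ P = v := by
    have h6 : (M * C⁻¹ * N) *ᵥ P = (2 * μ * τ)⁻¹ • (M *ᵥ w) := by
      rw [hCinv, Matrix.mul_smul, Matrix.smul_mul, smul_mulVec]
      congr 1
      rw [← mulVec_mulVec, ← mulVec_mulVec, hw_def]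
    have h7 : a * (M *ᵥ w ⬝ᵥ P) + b * (N *ᵥ w ⬝ᵥ P) = N *ᵥ P ⬝ᵥ P := by
      have := congrArg (fun u => u ⬝ᵥ P) hAw
      simpa [hA_def, add_mulVec, smul_mulVec, add_dotProduct,
        smul_dotProduct, smul_eq_mul] using this
    have h8 : A *ᵥ xs ⬝ᵥ xs = b * b * (N *ᵥ P ⬝ᵥ w) := by
      rw [hAxs, hxs_def, smul_dotProduct, dotProduct_smul, smul_eq_mul, smul_eq_mul]
      ring
    have h9 : N *ᵥ w ⬝ᵥ P = N *ᵥ P ⬝ᵥ w := hswap N hNt w P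
    rw [h6, smul_dotProduct, smul_eq_mul, hv_def, h8]
    rw [h9] at h7
    have hab : a ≠ 0 := ha.ne'
    have key : b * (N *ᵥ P ⬝ᵥ P) - b * b * (N *ᵥ P ⬝ᵥ w) = b * a * (M *ᵥ w ⬝ᵥ P) := by
      rw [← h7]; ring
    rw [key, ha_def, hb_def]
    ring
  rw [add_mulVec, add_dotProduct, smul_mulVec, smul_dotProduct, smul_eq_mul, hgoal]
end

section
/- Let A be symmetric positive definite n×n, and suppose preconditioners R (symmetric positive semidefinite) and a map Π: ℝᵐ → ℝⁿ with auxiliary SPD matrix A₀ (m×m) satisfy: (i) ⟨A Π u₀, Π u₀⟩ ≤ c_Π ⟨A₀ u₀, u₀⟩ for all u₀; (ii) for every u ∈ ℝⁿ there exist u₀ ∈ ℝᵐ and decomposition u = w + Π u₀ with ⟨R⁻¹ w, w⟩ + ⟨A₀ u₀, u₀⟩ ≤ c_s ⟨A u, u⟩ (where R is SPD); (iii) ⟨A v, v⟩ ≤ c_R ⟨R⁻¹ v, v⟩ for all v. Then the additive preconditioner B = R + Π A₀⁻¹ Πᵀ satisfies spectral bounds c_s⁻¹ ⟨A u, u⟩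 ≤ ⟨(B A) u, u⟩_A ≤ (c_R + c_Π) ⟨A u, u⟩ in the sense that the eigenvalues of B A lie in [1/c_s, c_R + c_Π], hence κ(B A) ≤ c_s (c_R + c_Π). -/
open Matrix

/-- Generalized Cauchy–Schwarz inequality for a positive semidefinite bilinear form. -/
lemma psd_cauchy_schwarz {n : Type*} [Fintype n] (M : Matrix n n ℝ) (hM : M.PosSemidef)
    (x y : n → ℝ) : (M *ᵥ x ⬝ᵥ y) ^ 2 ≤ (M *ᵥ x ⬝ᵥ x) * (M *ᵥ y ⬝ᵥ y) := by
  have hsymm : ∀ a b : n → ℝ, M *ᵥ a ⬝ᵥ b = a ⬝ᵥ M *ᵥ b := fun a b => by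
    rw [dotProduct_mulVec, ← mulVec_transpose, show Mᵀ = M from (show M.IsSymm by simpa using hM.1).eq, dotProduct_comm]
  have key : ∀ t : ℝ, 0 ≤ (M *ᵥ y ⬝ᵥ y) * (t * t) + (2 * (M *ᵥ x ⬝ᵥ y)) * t + (M *ᵥ x ⬝ᵥ x) := by
    intro t
    have h0 : 0 ≤ M *ᵥ (x + t • y) ⬝ᵥ (x + t • y) := by
      simpa [dotProduct_comm] using hM.dotProduct_mulVec_nonneg (x + t • y)
    have hexp : M *ᵥ (x + t • y) ⬝ᵥ (x + t • y)
        = (M *ᵥ y ⬝ᵥ y) * (t * t) + (2 * (M *ᵥ x ⬝ᵥ y)) * t + (M *ᵥ x ⬝ᵥ x) := by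
      have h1 : M *ᵥ y ⬝ᵥ x = M *ᵥ x ⬝ᵥ y := by rw [hsymm, dotProduct_comm]
      simp [mulVec_add, mulVec_smul, add_dotProduct, dotProduct_add, dotProduct_smul,
        smul_dotProduct, smul_eq_mul, h1]
      ring
    rw [hexp] at h0; exact h0
  have := discrim_le_zero key
  unfold discrim at this
  nlinarith [this]

/-- Cauchy–Schwarz for a sum of two estimates. -/
lemma sum_cs {α β a1 a2 b1 b2 : ℝ} (ha1 : 0 ≤ a1) (ha2 : 0 ≤ a2) (hb1 : 0 ≤ b1) (hb2 : 0 ≤ b2)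
    (h1 : α ^ 2 ≤ a1 * b1) (h2 : β ^ 2 ≤ a2 * b2) :
    (α + β) ^ 2 ≤ (a1 + a2) * (b1 + b2) := by
  nlinarith [sq_nonneg (a1 * b2 - a2 * b1), sq_nonneg (α * β), sq_nonneg (α - β),
    mul_nonneg ha1 hb2, mul_nonneg ha2 hb1, mul_nonneg (mul_nonneg ha1 hb1) (mul_nonneg ha2 hb2),
    sq_nonneg (a1 * b2 + a2 * b1 - 2 * α * β)]

/-- Finite-dimensional auxiliary space lemma (Xu 1996, underlying Theorem 3.1):
under the transfer-operator boundedness (i), stable decomposition (ii) and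
smoother bound (iii), the additive preconditioner `B = R + Π A₀⁻¹ Πᵀ` satisfies
the spectral bounds: every eigenvalue of `B A` lies in `[1/c_s, c_R + c_Π]`,
hence the ratio of any two eigenvalues, in particular `κ(B A)`, is at most
`c_s (c_R + c_Π)`. -/
theorem auxiliary_space_preconditioner_bounds
    {n m : Type*} [Fintype n] [Fintype m] [DecidableEq n] [DecidableEq m]
    (A R : Matrix n n ℝ) (hA : A.PosDef) (hR : R.PosDef)
    (A₀ : Matrix m m ℝ) (hA₀ : A₀.PosDef)
    (Pi : Matrix n m ℝ)
    (cPi cs cR : ℝ) (hcPi : 0 < cPi) (hcs : 0 < cs) (hcR : 0 < cR)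
    (hi : ∀ u₀ : m → ℝ,
      A.mulVec (Pi.mulVec u₀) ⬝ᵥ Pi.mulVec u₀ ≤ cPi * (A₀.mulVec u₀ ⬝ᵥ u₀))
    (hii : ∀ u : n → ℝ, ∃ (w : n → ℝ) (u₀ : m → ℝ), u = w + Pi.mulVec u₀ ∧
      (R⁻¹.mulVec w ⬝ᵥ w) + (A₀.mulVec u₀ ⬝ᵥ u₀) ≤ cs * (A.mulVec u ⬝ᵥ u))
    (hiii : ∀ v : n → ℝ, A.mulVec v ⬝ᵥ v ≤ cR * (R⁻¹.mulVec v ⬝ᵥ v)) :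
    let B := R + Pi * A₀⁻¹ * Piᵀ
    (∀ (t : ℝ) (v : n → ℝ), v ≠ 0 → (B * A).mulVec v = t • v →
        1 / cs ≤ t ∧ t ≤ cR + cPi) ∧
      (∀ (t t' : ℝ) (v v' : n → ℝ), v ≠ 0 → v' ≠ 0 →
        (B * A).mulVec v = t • v → (B * A).mulVec v' = t' • v' →
        t / t' ≤ cs * (cR + cPi)) := by
  intro B
  -- basic facts
  have hRinv : R⁻¹.PosDef := hR.inv
  have hA₀inv : A₀⁻¹.PosDef := hA₀.inv
  have hRcancel : ∀ x : n → ℝ, R⁻¹ *ᵥ (R *ᵥ x) = x := fun x => by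
    rw [mulVec_mulVec, nonsing_inv_mul _ (isUnit_iff_ne_zero.mpr hR.det_pos.ne'), one_mulVec]
  have hA₀cancel : ∀ x : m → ℝ, A₀ *ᵥ (A₀⁻¹ *ᵥ x) = x := fun x => by
    rw [mulVec_mulVec, mul_nonsing_inv _ (isUnit_iff_ne_zero.mpr hA₀.det_pos.ne'), one_mulVec]
  have hPit : ∀ (z : m → ℝ) (u : n → ℝ), Pi *ᵥ z ⬝ᵥ u = z ⬝ᵥ Piᵀ *ᵥ u := fun z u => by
    rw [dotProduct_comm, dotProduct_mulVec, ← mulVec_transpose, dotProduct_comm]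
  -- the main eigenvalue bound
  have key : ∀ (t : ℝ) (v : n → ℝ), v ≠ 0 → (B * A).mulVec v = t • v →
      1 / cs ≤ t ∧ t ≤ cR + cPi := by
    intro t v hv heig
    set u : n → ℝ := A *ᵥ v with hu
    set s : ℝ := A *ᵥ v ⬝ᵥ v with hsdef
    have hs : 0 < s := by simpa [hsdef, dotProduct_comm] using hA.dotProduct_mulVec_pos hv
    have hBu : B *ᵥ u = t • v := by
      rw [hu, mulVec_mulVec]; exact heig
    -- decompose ⟨Bu, u⟩ = α + q
    set p : m → ℝ := Piᵀ *ᵥ u with hp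
    set z : m → ℝ := A₀⁻¹ *ᵥ p with hz
    set α : ℝ := R *ᵥ u ⬝ᵥ u with hα
    set q : ℝ := A₀⁻¹ *ᵥ p ⬝ᵥ p with hq
    have hα0 : 0 ≤ α := by simpa [hα, dotProduct_comm] using hR.posSemidef.dotProduct_mulVec_nonneg u
    have hq0 : 0 ≤ q := by simpa [hq, dotProduct_comm] using hA₀inv.posSemidef.dotProduct_mulVec_nonneg p
    have hBuu : B *ᵥ u ⬝ᵥ u = α + q := by
      have h2 : (Pi * A₀⁻¹ * Piᵀ) *ᵥ u = Pi *ᵥ z := by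
        rw [hz, hp]; simp only [mulVec_mulVec]; rw [Matrix.mul_assoc]
      have h3 : Pi *ᵥ z ⬝ᵥ u = q := by rw [hPit, ← hp, hq, hz, dotProduct_comm]
      show (R + Pi * A₀⁻¹ * Piᵀ) *ᵥ u ⬝ᵥ u = α + q
      rw [add_mulVec, add_dotProduct, h2, h3, hα]
    have hts : B *ᵥ u ⬝ᵥ u = t * s := by
      rw [hBu, smul_dotProduct, smul_eq_mul, hsdef, hu, dotProduct_comm]
    have htsαq : t * s = α + q := by rw [← hts, hBuu]
    -- upper bound for α : α ≤ cR * s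
    have hαle : α ≤ cR * s := by
      have hcs1 : (A *ᵥ v ⬝ᵥ (R *ᵥ u)) ^ 2
          ≤ (A *ᵥ v ⬝ᵥ v) * (A *ᵥ (R *ᵥ u) ⬝ᵥ (R *ᵥ u)) :=
        psd_cauchy_schwarz A hA.posSemidef v (R *ᵥ u)
      have h1 : A *ᵥ v ⬝ᵥ (R *ᵥ u) = α := by
        rw [← hu, hα, dotProduct_comm]
      have h2 : A *ᵥ (R *ᵥ u) ⬝ᵥ (R *ᵥ u) ≤ cR * α := by
        have := hiii (R *ᵥ u)
        rwa [hRcancel u, dotProduct_comm u (R *ᵥ u), ← hα] at this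
      rw [h1, ← hsdef] at hcs1
      have : α ^ 2 ≤ s * (cR * α) :=
        le_trans hcs1 (mul_le_mul_of_nonneg_left h2 hs.le)
      rcases hα0.eq_or_lt with h | h
      · rw [← h]; positivity
      · nlinarith
    -- upper bound for q : q ≤ cPi * s
    have hqle : q ≤ cPi * s := by
      have hcs2 : (A *ᵥ v ⬝ᵥ (Pi *ᵥ z)) ^ 2
          ≤ (A *ᵥ v ⬝ᵥ v) * (A *ᵥ (Pi *ᵥ z) ⬝ᵥ (Pi *ᵥ z)) :=
        psd_cauchy_schwarz A hA.posSemidef v (Pi *ᵥ z)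
      have h1 : A *ᵥ v ⬝ᵥ (Pi *ᵥ z) = q := by
        rw [← hu, dotProduct_comm, hPit, ← hp, hz, hq, dotProduct_comm]
      have h2 : A *ᵥ (Pi *ᵥ z) ⬝ᵥ (Pi *ᵥ z) ≤ cPi * q := by
        have := hi z
        have hA₀z : A₀ *ᵥ z ⬝ᵥ z = q := by
          rw [hz, hA₀cancel, hq, dotProduct_comm]
        rwa [hA₀z] at this
      rw [h1, ← hsdef] at hcs2
      have : q ^ 2 ≤ s * (cPi * q) :=
        le_trans hcs2 (mul_le_mul_of_nonneg_left h2 hs.le)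
      rcases hq0.eq_or_lt with h | h
      · rw [← h]; positivity
      · nlinarith
    have hupper : t ≤ cR + cPi := by
      have : t * s ≤ (cR + cPi) * s := by rw [htsαq, add_mul]; linarith
      exact le_of_mul_le_mul_right (by linarith) hs
    refine ⟨?_, hupper⟩
    -- lower bound via stable decomposition
    obtain ⟨w, u₀, hdec, hstab⟩ := hii v
    set b1 : ℝ := R⁻¹ *ᵥ w ⬝ᵥ w with hb1
    set b2 : ℝ := A₀ *ᵥ u₀ ⬝ᵥ u₀ with hb2
    have hb10 : 0 ≤ b1 := by simpa [hb1, dotProduct_comm] using hRinv.posSemidef.dotProduct_mulVec_nonneg w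
    have hb20 : 0 ≤ b2 := by simpa [hb2, dotProduct_comm] using hA₀.posSemidef.dotProduct_mulVec_nonneg u₀
    have hsplit : s = u ⬝ᵥ w + u ⬝ᵥ Pi *ᵥ u₀ := by
      rw [hsdef, ← hu, dotProduct_comm, hdec, add_dotProduct, dotProduct_comm,
        dotProduct_comm (Pi *ᵥ u₀)]
    -- ⟨u, w⟩² ≤ α * b1
    have huw : (u ⬝ᵥ w) ^ 2 ≤ α * b1 := by
      have := psd_cauchy_schwarz R⁻¹ hRinv.posSemidef (R *ᵥ u) w
      rwa [hRcancel u, dotProduct_comm u (R *ᵥ u), ← hα, ← hb1] at this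
    -- ⟨u, Π u₀⟩² ≤ q * b2
    have huPi : (u ⬝ᵥ Pi *ᵥ u₀) ^ 2 ≤ q * b2 := by
      have hcs3 := psd_cauchy_schwarz A₀ hA₀.posSemidef z u₀
      have h1 : A₀ *ᵥ z ⬝ᵥ u₀ = u ⬝ᵥ Pi *ᵥ u₀ := by
        rw [hz, hA₀cancel, hp, dotProduct_comm (Piᵀ *ᵥ u) u₀, ← hPit, dotProduct_comm]
      have h2 : A₀ *ᵥ z ⬝ᵥ z = q := by rw [hz, hA₀cancel, hq, dotProduct_comm]
      rwa [h1, h2, ← hb2] at hcs3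
    have hsum : s ^ 2 ≤ (α + q) * (b1 + b2) := by
      rw [hsplit]; exact sum_cs hα0 hq0 hb10 hb20 huw huPi
    have hstab' : b1 + b2 ≤ cs * s := by rw [hb1, hb2, hsdef]; exact hstab
    have hαq0 : 0 ≤ α + q := by linarith
    have hfinal : s ^ 2 ≤ t * s * (cs * s) := by
      calc s ^ 2 ≤ (α + q) * (b1 + b2) := hsum
        _ ≤ (α + q) * (cs * s) := mul_le_mul_of_nonneg_left hstab' hαq0
        _ = t * s * (cs * s) := by rw [htsαq]
    have h1t : 1 ≤ t * cs := by
      have hs2 : 0 < s * s := mul_pos hs hs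
      nlinarith
    rw [div_le_iff₀ hcs]
    exact h1t
  refine ⟨key, ?_⟩
  intro t t' v v' hv hv' he he'
  obtain ⟨hl, hu⟩ := key t v hv he
  obtain ⟨hl', _⟩ := key t' v' hv' he'
  have ht'pos : 0 < t' := lt_of_lt_of_le (by positivity) hl'
  rw [div_le_iff₀ ht'pos]
  calc t ≤ cR + cPi := hu
    _ = (cs * (cR + cPi)) * (1 / cs) := by field_simp
    _ ≤ (cs * (cR + cPi)) * t' := by
        apply mul_le_mul_of_nonneg_left hl'
        positivity
end
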